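/- arXiv:1310.7103 — 4 statements merged into one kernel-verified Lean document; each statement's English description precedes it below -/
import Mathlib

section
/- For all nonnegative integers n and positive integers k, the Changhee number of the second kind with order k satisfies Ĉh_n^{(k)} = Σ_{m=0}^{n} m! binomial(k,m) binomial(n,m) Ch_{n-m}^{(k)}. -/
open PowerSeries Finset

/-- Higher-order Changhee numbers of the first kind. -/
noncomputable def Ch (k n : ℕ) : ℚ := (-1/2)^n * n.factorial * ((n+k-1).choose n)

/-- Signed Stirling numbers of the first kind, via coefficients of the falling factorial. -/
noncomputable def stirling1 (n l : ℕ) : ℚ :=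
  (∏ i ∈ Finset.range n, (Polynomial.X - (i : Polynomial ℚ))).coeff l

/-- Stirling numbers of the second kind, via (e^t-1)^n = n! Σ S₂(m,n) t^m/m!. -/
noncomputable def stirling2 (m n : ℕ) : ℚ :=
  (m.factorial : ℚ) / n.factorial * PowerSeries.coeff m ((PowerSeries.exp ℚ - 1)^n)

/-- Higher-order Euler numbers, from (2/(e^t+1))^k. -/
noncomputable def EulerN (k l : ℕ) : ℚ :=
  l.factorial * PowerSeries.coeff l ((2 * (PowerSeries.exp ℚ + 1)⁻¹)^k)

/-- Higher-order Euler polynomials, from (2/(e^t+1))^k e^{xt}. -/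
noncomputable def EulerP (k : ℕ) (x : ℚ) (l : ℕ) : ℚ :=
  l.factorial * PowerSeries.coeff l
    ((2 * (PowerSeries.exp ℚ + 1)⁻¹)^k * PowerSeries.rescale x (PowerSeries.exp ℚ))

/-- Generalized binomial coefficient. -/
noncomputable def gbinom (x : ℚ) (m : ℕ) : ℚ := (∏ i ∈ Finset.range m, (x - i)) / m.factorial

/-- Binomial series (1+t)^x. -/
noncomputable def onePlusXPow (x : ℚ) : PowerSeries ℚ := PowerSeries.mk fun m => gbinom x m

/-- Higher-order Changhee polynomials of the first kind, from (2/(2+t))^k (1+t)^x. -/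
noncomputable def ChP (k : ℕ) (x : ℚ) (n : ℕ) : ℚ :=
  n.factorial * PowerSeries.coeff n
    ((2 * (2 + PowerSeries.X : PowerSeries ℚ)⁻¹)^k * onePlusXPow x)

/-- Higher-order Changhee numbers of the second kind, from (2/(2+t))^k (1+t)^k. -/
noncomputable def ChhN (k n : ℕ) : ℚ :=
  n.factorial * PowerSeries.coeff n
    ((2 * (2 + PowerSeries.X : PowerSeries ℚ)⁻¹)^k * (1 + PowerSeries.X)^k)

/-- Higher-order Changhee polynomials of the second kind, from (2/(2+t))^k (1+t)^{x+k}. -/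
noncomputable def ChP2 (k : ℕ) (x : ℚ) (n : ℕ) : ℚ :=
  n.factorial * PowerSeries.coeff n
    ((2 * (2 + PowerSeries.X : PowerSeries ℚ)⁻¹)^k * onePlusXPow (x + k))


noncomputable def S : PowerSeries ℚ := PowerSeries.mk fun j => (-1/2 : ℚ)^j

lemma two_eq : (2 : ℚ⟦X⟧) = PowerSeries.C (2 : ℚ) := (map_ofNat (PowerSeries.C (R := ℚ)) 2).symm

lemma key1 : S * ((2 : ℚ⟦X⟧) + X) = 2 := by
  ext n
  rw [mul_add, two_eq]
  cases n with
  | zero => simp [S]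
  | succ n =>
    rw [mul_comm S X]
    simp [S, coeff_succ_X_mul, coeff_mul_C, coeff_C, pow_succ]
    ring

lemma key2 : (2 * ((2 : ℚ⟦X⟧) + X)⁻¹) = S := by
  symm
  rw [PowerSeries.eq_mul_inv_iff_mul_eq (by rw [two_eq]; simp)]
  exact key1

lemma coeff_S_pow_succ (k : ℕ) : ∀ n : ℕ,
    PowerSeries.coeff n (S ^ (k+1)) = (-1/2 : ℚ)^n * ((n + k).choose n) := by
  induction k with
  | zero => intro n; simp [S]
  | succ k ih =>
    intro n
    rw [pow_succ, mul_comm, PowerSeries.coeff_mul,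
      Finset.Nat.sum_antidiagonal_eq_sum_range_succ (fun i j => PowerSeries.coeff i S * PowerSeries.coeff j (S^(k+1)))]
    have : ∀ i ∈ Finset.range (n+1),
        PowerSeries.coeff i S * PowerSeries.coeff (n - i) (S^(k+1))
        = (-1/2 : ℚ)^n * (((n - i) + k).choose k) := by
      intro i hi
      simp only [Finset.mem_range] at hi
      rw [ih]
      simp only [S, coeff_mk]
      rw [← mul_assoc, ← pow_add, Nat.choose_symm_add]
      congr 2
      omega
    rw [Finset.sum_congr rfl this, ← Finset.mul_sum]
    congr 1
    rw [show ∑ i ∈ Finset.range (n+1), ((((n - i) + k).choose k : ℕ) : ℚ)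
        = ((∑ i ∈ Finset.range (n+1), ((n - i) + k).choose k : ℕ) : ℚ) by push_cast; rfl]
    congr 1
    have hre : ∑ i ∈ Finset.range (n+1), (n - i + k).choose k
        = ∑ i ∈ Finset.range (n+1), (i + k).choose k := by
      rw [← Finset.sum_range_reflect (fun i => (i + k).choose k) (n+1)]
      refine Finset.sum_congr rfl fun j hj => ?_
      congr 2
    rw [hre, Nat.sum_range_add_choose n k, show n + k + 1 = n + (k+1) by omega]
    exact Nat.choose_symm_add.symm

lemma coeff_one_add_X_pow (k m : ℕ) :
    PowerSeries.coeff m ((1 + X : ℚ⟦X⟧)^k) = (k.choose m : ℚ) := by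
  rw [add_comm, add_pow]
  simp only [one_pow, mul_one, map_sum]
  have : ∀ i ∈ Finset.range (k+1),
      PowerSeries.coeff m ((X : ℚ⟦X⟧)^i * ((k.choose i : ℕ) : ℚ⟦X⟧))
      = if m = i then (k.choose i : ℚ) else 0 := by
    intro i _
    rw [show ((k.choose i : ℕ) : ℚ⟦X⟧) = PowerSeries.C (k.choose i : ℚ) by norm_cast,
      PowerSeries.coeff_mul_C, PowerSeries.coeff_X_pow]
    split <;> simp_all
  rw [Finset.sum_congr rfl this, Finset.sum_ite_eq]
  split <;> simp_all [Nat.choose_eq_zero_of_lt, Nat.lt_of_succ_le, Nat.succ_le_of_lt]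

theorem changhee2_eq_sum (n : ℕ) (k : ℕ) (hk : 0 < k) :
    ChhN k n = ∑ m ∈ Finset.range (n+1),
      (m.factorial : ℚ) * (k.choose m) * (n.choose m) * Ch k (n-m) := by
  obtain ⟨k, rfl⟩ : ∃ k', k = k' + 1 := ⟨k - 1, by omega⟩
  rw [ChhN, key2, mul_comm (S ^ (k+1)), PowerSeries.coeff_mul,
    Finset.Nat.sum_antidiagonal_eq_sum_range_succ
      (fun i j => PowerSeries.coeff i ((1 + X : ℚ⟦X⟧)^(k+1)) * PowerSeries.coeff j (S^(k+1))),
    Finset.mul_sum]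
  refine Finset.sum_congr rfl fun m hm => ?_
  simp only [Finset.mem_range] at hm
  rw [coeff_one_add_X_pow, coeff_S_pow_succ, Ch]
  rw [show n - m + (k+1) - 1 = n - m + k by omega]
  have hfac : (n.factorial : ℚ) = (m.factorial : ℚ) * (n.choose m) * ((n-m).factorial) := by
    rw [show (m.factorial : ℚ) * (n.choose m) * ((n-m).factorial)
        = ((n.choose m * m.factorial * (n-m).factorial : ℕ) : ℚ) by push_cast; ring,
      Nat.choose_mul_factorial_mul_factorial (by omega)]
  rw [hfac]
  ring
end

section
/- For all nonnegative integers n and positive integers k, Ĉh_n^{(k)} = Σ_{l=0}^{n} (-1)^l s(n,l) E_l^{(k)}, where s(n,l) are the signed Stirling numbers of the first kind and E_l^{(k)} the higher-order Euler numbers. -/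
open PowerSeries Finset

/-- coefficients of the expansion of (1+u)^{-k} -/
noncomputable def cc (k j : ℕ) : ℚ := (-1)^j * ((j+k-1).choose j : ℚ)

lemma cc_rec (k j : ℕ) : cc (k+1) j = cc k (j+1) - cc (k+1) (j+1) := by
  simp only [cc]
  have h1 : j + 1 + k - 1 = j + k := by omega
  have h2 : j + 1 + (k+1) - 1 = j + k + 1 := by omega
  have h3 : j + (k+1) - 1 = j + k := by omega
  rw [h1, h2, h3]
  have := Nat.choose_succ_succ (j+k) j
  have hc : ((j+k+1).choose (j+1) : ℚ) = (j+k).choose j + (j+k).choose (j+1) := by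
    rw [this]; push_cast; ring
  rw [hc]; ring

noncomputable def Sser (u : ℚ⟦X⟧) (k N : ℕ) : ℚ⟦X⟧ :=
  ∑ j ∈ range (N+1), PowerSeries.C (cc k j) * u^j

lemma Sser_step (u : ℚ⟦X⟧) (k N : ℕ) :
    (1+u) * Sser u (k+1) N
      = Sser u k N + PowerSeries.C (cc (k+1) N) * u^(N+1) := by
  have h1 : (1+u) * Sser u (k+1) N = Sser u (k+1) N + u * Sser u (k+1) N := by ring
  have h2 : u * Sser u (k+1) N
      = ∑ j ∈ range (N+1), PowerSeries.C (cc (k+1) j) * u^(j+1) := by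
    rw [Sser, Finset.mul_sum]; apply Finset.sum_congr rfl; intros; ring
  have h4 : Sser u k N = Sser u (k+1) N +
      ∑ j ∈ range (N+1), PowerSeries.C (cc k j - cc (k+1) j) * u^j := by
    simp only [Sser, ← Finset.sum_add_distrib, map_sub]; apply Finset.sum_congr rfl; intros; ring
  have h5 : ∑ j ∈ range (N+1), PowerSeries.C (cc k j - cc (k+1) j) * u^j
      = ∑ j ∈ range N, PowerSeries.C (cc (k+1) j) * u^(j+1) := by
    rw [Finset.sum_range_succ']
    have h0 : cc k 0 - cc (k+1) 0 = 0 := by simp [cc]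
    rw [h0]
    simp only [map_zero, zero_mul, add_zero]
    apply Finset.sum_congr rfl
    intro j _
    rw [show cc k (j+1) - cc (k+1) (j+1) = cc (k+1) j from (cc_rec k j).symm]
  have h6 : ∑ j ∈ range (N+1), PowerSeries.C (cc (k+1) j) * u^(j+1)
      = ∑ j ∈ range N, PowerSeries.C (cc (k+1) j) * u^(j+1)
        + PowerSeries.C (cc (k+1) N) * u^(N+1) := Finset.sum_range_succ _ _
  rw [h1, h2, h4, h5, h6]; ring

lemma Sser_inv (u : ℚ⟦X⟧) (N : ℕ) :
    ∀ k, ∃ r, (1+u)^k * Sser u k N = 1 + u^(N+1) * r := by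
  intro k
  induction k with
  | zero =>
    refine ⟨0, ?_⟩
    rw [pow_zero, one_mul, mul_zero, add_zero, Sser]
    rw [Finset.sum_eq_single 0]
    · simp [cc]
    · intro j _ hj
      have : (j + 0 - 1).choose j = 0 := Nat.choose_eq_zero_of_lt (by omega)
      simp only [cc, this, Nat.cast_zero, mul_zero, map_zero, zero_mul]
    · intro h; exact absurd (Finset.mem_range.2 (Nat.succ_pos N)) h
  | succ k ih =>
    obtain ⟨r, hr⟩ := ih
    refine ⟨r + PowerSeries.C (cc (k+1) N) * (1+u)^k, ?_⟩
    have : (1+u)^(k+1) * Sser u (k+1) N = (1+u)^k * ((1+u) * Sser u (k+1) N) := by ring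
    rw [this, Sser_step, mul_add, hr]; ring

lemma coeff_inv_pow_expand (u : ℚ⟦X⟧) (hu : constantCoeff u = 0) (k N : ℕ) :
    PowerSeries.coeff N (((1+u)^k)⁻¹)
      = ∑ j ∈ range (N+1), cc k j * PowerSeries.coeff N (u^j) := by
  have hC : constantCoeff ((1+u)^k) ≠ 0 := by
    rw [map_pow, map_add, map_one, hu, add_zero, one_pow]; norm_num
  obtain ⟨r, hr⟩ := Sser_inv u N k
  obtain ⟨s, hs⟩ : (X : ℚ⟦X⟧)^(N+1) ∣ u^(N+1) :=
    pow_dvd_pow_of_dvd (PowerSeries.X_dvd_iff.2 hu) _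
  have hinv : (1+u)^k * ((1+u)^k)⁻¹ = 1 := PowerSeries.mul_inv_cancel _ hC
  have key : Sser u k N - ((1+u)^k)⁻¹ = ((1+u)^k)⁻¹ * (u^(N+1) * r) := by
    have : (1+u)^k * (Sser u k N - ((1+u)^k)⁻¹) = u^(N+1) * r := by
      rw [mul_sub, hr, hinv]; ring
    calc Sser u k N - ((1+u)^k)⁻¹
        = ((1+u)^k)⁻¹ * ((1+u)^k * (Sser u k N - ((1+u)^k)⁻¹)) := by
          rw [← mul_assoc, PowerSeries.inv_mul_cancel _ hC, one_mul]
      _ = ((1+u)^k)⁻¹ * (u^(N+1) * r) := by rw [this]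
  have hz : PowerSeries.coeff N (((1+u)^k)⁻¹ * (u^(N+1) * r)) = 0 := by
    rw [hs, show ((1+u)^k)⁻¹ * (X^(N+1) * s * r) = X^(N+1) * (((1+u)^k)⁻¹ * s * r) by ring]
    rw [PowerSeries.coeff_X_pow_mul']
    simp
  have : PowerSeries.coeff N (Sser u k N) = PowerSeries.coeff N (((1+u)^k)⁻¹) := by
    have := congrArg (PowerSeries.coeff N) key
    rw [map_sub, hz] at this
    linarith
  rw [← this, Sser, map_sum]
  apply Finset.sum_congr rfl
  intro j _
  rw [PowerSeries.coeff_C_mul]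


lemma inv_pow' (w : ℚ⟦X⟧) (hw : constantCoeff w ≠ 0) (k : ℕ) :
    (w⁻¹)^k = (w^k)⁻¹ := by
  rw [PowerSeries.eq_inv_iff_mul_eq_one (by rw [map_pow]; exact pow_ne_zero _ hw)]
  rw [← mul_pow, PowerSeries.inv_mul_cancel _ hw, one_pow]

lemma coeff_inv_one_add_X_pow (j m : ℕ) :
    PowerSeries.coeff m (((1 + X : ℚ⟦X⟧)^j)⁻¹) = (-1)^m * ((m+j-1).choose m : ℚ) := by
  rw [coeff_inv_pow_expand X (by simp) j m]
  rw [Finset.sum_eq_single m]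
  · rw [PowerSeries.coeff_X_pow, if_pos rfl, mul_one, cc]
  · intro i _ hi
    rw [PowerSeries.coeff_X_pow, if_neg (fun h => hi h.symm), mul_zero]
  · intro h; exact absurd (Finset.mem_range.2 (Nat.lt_succ_self m)) h


noncomputable def vch : ℚ⟦X⟧ := PowerSeries.C (-2⁻¹) * (X * (1+X)⁻¹)

lemma constCoeff_vch : constantCoeff vch = 0 := by
  simp [vch]

lemma two_add_ne : constantCoeff (2 + X : ℚ⟦X⟧) ≠ 0 := by
  have h2 : (constantCoeff (R := ℚ)) (2:ℚ⟦X⟧) = 2 := map_ofNat _ 2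
  rw [map_add, constantCoeff_X, add_zero, h2]
  norm_num
lemma one_add_ne : constantCoeff (1 + X : ℚ⟦X⟧) ≠ 0 := by simp
lemma one_add_v_ne : constantCoeff (1 + vch) ≠ 0 := by
  rw [map_add, map_one, constCoeff_vch, add_zero]; norm_num

lemma changhee_base : (2 * (2 + X : ℚ⟦X⟧)⁻¹) * (1+X) * (1 + vch) = 1 := by
  have ha : (2 + X : ℚ⟦X⟧) * (2+X)⁻¹ = 1 := PowerSeries.mul_inv_cancel _ two_add_ne
  have hb : (1 + X : ℚ⟦X⟧) * (1+X)⁻¹ = 1 := PowerSeries.mul_inv_cancel _ one_add_ne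
  have h2 : (2 : ℚ⟦X⟧) * PowerSeries.C (-2⁻¹) = -1 := by
    have : (2 : ℚ⟦X⟧) = PowerSeries.C 2 := by
      rw [map_ofNat]
    rw [this, ← map_mul]; norm_num
  set a := (2 + X : ℚ⟦X⟧)⁻¹
  set b := (1 + X : ℚ⟦X⟧)⁻¹
  rw [vch]
  linear_combination (a*(1+X)*X*b) * h2 + (-(a*X)) * hb + ha

lemma changhee_gf (k : ℕ) :
    (2 * (2 + X : ℚ⟦X⟧)⁻¹)^k * (1+X)^k = ((1 + vch)^k)⁻¹ := by
  rw [← mul_pow, ← inv_pow' _ one_add_v_ne]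
  congr 1
  rw [PowerSeries.eq_inv_iff_mul_eq_one one_add_v_ne]
  exact changhee_base

lemma ChhN_eq (k n : ℕ) : ChhN k n
    = ∑ j ∈ range (n+1), (n.factorial : ℚ) * cc k j * (-2⁻¹)^j
        * ((-1)^(n-j) * (((n-1).choose (n-j)) : ℚ)) := by
  rw [ChhN, changhee_gf, coeff_inv_pow_expand _ constCoeff_vch, Finset.mul_sum]
  apply Finset.sum_congr rfl
  intro j hj
  have hjn : j ≤ n := Nat.lt_succ_iff.1 (Finset.mem_range.1 hj)
  have hv : vch ^ j = PowerSeries.C ((-2⁻¹)^j) * (X^j * ((1+X : ℚ⟦X⟧)⁻¹)^j) := by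
    rw [vch, mul_pow, mul_pow, map_pow]
  rw [hv, PowerSeries.coeff_C_mul, inv_pow' _ one_add_ne,
    PowerSeries.coeff_X_pow_mul' , if_pos hjn, coeff_inv_one_add_X_pow]
  have : n - j + j - 1 = n - 1 := by omega
  rw [this]; ring


noncomputable def e2 : ℚ⟦X⟧ := PowerSeries.C 2⁻¹ * (PowerSeries.exp ℚ - 1)

lemma constCoeff_em1 : constantCoeff (PowerSeries.exp ℚ - 1) = 0 := by
  rw [map_sub, map_one, PowerSeries.constantCoeff_exp, sub_self]

lemma constCoeff_e2 : constantCoeff e2 = 0 := by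
  rw [e2, map_mul, constCoeff_em1, mul_zero]

lemma exp_add_ne : constantCoeff (PowerSeries.exp ℚ + 1) ≠ 0 := by
  rw [map_add, map_one, PowerSeries.constantCoeff_exp]; norm_num

lemma euler_gf : (2 * (PowerSeries.exp ℚ + 1)⁻¹) = (1 + e2)⁻¹ := by
  have hone : constantCoeff (1 + e2) ≠ 0 := by
    rw [map_add, map_one, constCoeff_e2, add_zero]; norm_num
  rw [PowerSeries.eq_inv_iff_mul_eq_one hone]
  have hc : (PowerSeries.exp ℚ + 1) * (PowerSeries.exp ℚ + 1)⁻¹ = 1 :=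
    PowerSeries.mul_inv_cancel _ exp_add_ne
  have h2 : (2 : ℚ⟦X⟧) * PowerSeries.C 2⁻¹ = 1 := by
    have : (2 : ℚ⟦X⟧) = PowerSeries.C 2 := by rw [map_ofNat]
    rw [this, ← map_mul]; norm_num
  set a := (PowerSeries.exp ℚ + 1)⁻¹
  set E := PowerSeries.exp ℚ
  rw [e2]
  linear_combination (a*(E-1)) * h2 + hc

lemma coeff_exp_sub_one_pow (j l : ℕ) :
    PowerSeries.coeff l ((PowerSeries.exp ℚ - 1)^j)
      = (∑ i ∈ range (j+1), (-1)^(j-i) * (j.choose i : ℚ) * (i:ℚ)^l) / l.factorial := by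
  have hb : (PowerSeries.exp ℚ - 1)^j
      = ∑ i ∈ range (j+1), PowerSeries.C ((-1)^(j-i) * (j.choose i : ℚ)) * (PowerSeries.exp ℚ)^i := by
    rw [sub_eq_add_neg, add_pow]
    apply Finset.sum_congr rfl
    intro i _
    have hneg : (-1 : ℚ⟦X⟧)^(j-i) = PowerSeries.C ((-1)^(j-i)) := by
      rw [map_pow, map_neg, map_one]
    have hnat : ((j.choose i : ℕ) : ℚ⟦X⟧) = PowerSeries.C (j.choose i : ℚ) := by
      rw [map_natCast]
    rw [hneg, hnat, map_mul]
    ring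
  rw [hb, map_sum, Finset.sum_div]
  apply Finset.sum_congr rfl
  intro i _
  rw [PowerSeries.coeff_C_mul, PowerSeries.exp_pow_eq_rescale_exp, PowerSeries.coeff_rescale,
    PowerSeries.coeff_exp, Algebra.algebraMap_self_apply]
  field_simp

lemma coeff_exp_sub_one_pow_zero (j l : ℕ) (h : l < j) :
    PowerSeries.coeff l ((PowerSeries.exp ℚ - 1)^j) = 0 := by
  obtain ⟨w, hw⟩ : (X : ℚ⟦X⟧)^j ∣ (PowerSeries.exp ℚ - 1)^j :=
    pow_dvd_pow_of_dvd (PowerSeries.X_dvd_iff.2 constCoeff_em1) _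
  rw [hw, PowerSeries.coeff_X_pow_mul', if_neg (by omega)]

lemma EulerN_eq (k l : ℕ) : EulerN k l
    = ∑ j ∈ range (l+1), cc k j * (2⁻¹:ℚ)^j
        * (∑ i ∈ range (j+1), (-1)^(j-i) * (j.choose i : ℚ) * (i:ℚ)^l) := by
  have hone : constantCoeff (1 + e2) ≠ 0 := by
    rw [map_add, map_one, constCoeff_e2, add_zero]; norm_num
  rw [EulerN, euler_gf, inv_pow' _ hone, coeff_inv_pow_expand _ constCoeff_e2, Finset.mul_sum]
  apply Finset.sum_congr rfl
  intro j _
  have he : e2 ^ j = PowerSeries.C ((2⁻¹:ℚ)^j) * (PowerSeries.exp ℚ - 1)^j := by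
    rw [e2, mul_pow, map_pow]
  rw [he, PowerSeries.coeff_C_mul, coeff_exp_sub_one_pow]
  have hl : (l.factorial : ℚ) ≠ 0 := Nat.cast_ne_zero.2 (Nat.factorial_ne_zero l)
  field_simp


lemma stirling1_eval (n : ℕ) (x : ℚ) :
    ∑ l ∈ range (n+1), stirling1 n l * x^l = ∏ i ∈ range n, (x - i) := by
  set p : Polynomial ℚ := ∏ i ∈ Finset.range n, (Polynomial.X - (i : Polynomial ℚ)) with hp
  have hdeg : p.natDegree < n + 1 := by
    have : p.natDegree ≤ n := by
      calc p.natDegree ≤ ∑ i ∈ range n, (Polynomial.X - (i : Polynomial ℚ)).natDegree :=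
        Polynomial.natDegree_prod_le _ _
      _ ≤ ∑ i ∈ range n, 1 := by
          apply Finset.sum_le_sum
          intro i _
          have : (i : Polynomial ℚ) = Polynomial.C (i:ℚ) := by
            rw [Polynomial.C_eq_natCast]
          rw [this, Polynomial.natDegree_X_sub_C]
      _ = n := by simp
    omega
  have he := Polynomial.eval_eq_sum_range' hdeg x
  have : p.eval x = ∏ i ∈ range n, (x - i) := by
    rw [hp, Polynomial.eval_prod]
    apply Finset.prod_congr rfl
    intro i _
    simp
  rw [← this, he]
  apply Finset.sum_congr rfl
  intro l _
  rfl

lemma prod_asc (i n : ℕ) : (∏ r ∈ range n, ((i:ℚ) + r)) = n.factorial * ((i+n-1).choose n : ℚ) := by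
  induction n with
  | zero => simp
  | succ n ih =>
    rw [Finset.prod_range_succ, ih]
    rcases Nat.eq_zero_or_pos i with hi | hi
    · subst hi
      rcases Nat.eq_zero_or_pos n with hn | hn
      · subst hn; simp
      · have h1 : (0+n-1).choose n = 0 := Nat.choose_eq_zero_of_lt (by omega)
        have h2 : (0+(n+1)-1).choose (n+1) = 0 := Nat.choose_eq_zero_of_lt (by omega)
        rw [h1, h2]; simp
    · have key : (i + n) * (i+n-1).choose n = (i+n).choose (n+1) * (n+1) := by
        have h := Nat.add_one_mul_choose_eq (i+n-1) n
        have h1 : i + n - 1 + 1 = i + n := by omega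
        simpa [Nat.succ_eq_add_one, h1] using h
      have keyQ : ((i:ℚ) + n) * ((i+n-1).choose n : ℚ) = ((i+n).choose (n+1) : ℚ) * (n+1) := by
        have := congrArg (Nat.cast : ℕ → ℚ) key
        push_cast at this
        push_cast
        linarith
      have h3 : i + (n+1) - 1 = i + n := by omega
      rw [h3, Nat.factorial_succ]
      push_cast
      nlinarith [keyQ]

lemma claimC (n j : ℕ) (hj : j ≤ n) :
    ∑ i ∈ range (j+1), (-1)^(j-i) * (j.choose i : ℚ) * ((i+n-1).choose n : ℚ)
      = ((n-1).choose (n-j) : ℚ) := by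
  rcases Nat.eq_zero_or_pos n with hn | hn
  · subst hn
    interval_cases j
    simp
  · obtain ⟨m, rfl⟩ : ∃ m, n = m + 1 := ⟨n-1, by omega⟩
    -- polynomial identity: X^j = Σ_i C(j,i) (X+1)^i (-1)^{j-i}
    have hpoly : (Polynomial.X : Polynomial ℚ)^j * (Polynomial.X + 1)^m
        = ∑ i ∈ range (j+1),
            Polynomial.C ((-1:ℚ)^(j-i) * (j.choose i : ℚ)) * (Polynomial.X + 1)^(i+m) := by
      have hb : (Polynomial.X : Polynomial ℚ)^j
          = ∑ i ∈ range (j+1), (Polynomial.X + 1)^i * (-1:Polynomial ℚ)^(j-i) * ((j.choose i : ℕ) : Polynomial ℚ) := by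
        have := add_pow (Polynomial.X + 1 : Polynomial ℚ) (-1) j
        simpa using this
      rw [hb, Finset.sum_mul]
      apply Finset.sum_congr rfl
      intro i _
      have hneg : (-1 : Polynomial ℚ)^(j-i) = Polynomial.C ((-1:ℚ)^(j-i)) := by
        rw [map_pow, map_neg, map_one]
      have hnat : ((j.choose i : ℕ) : Polynomial ℚ) = Polynomial.C (j.choose i : ℚ) := by
        rw [Polynomial.C_eq_natCast]
      rw [hneg, hnat, map_mul, pow_add]
      ring
    have := congrArg (fun p : Polynomial ℚ => p.coeff (m+1)) hpoly
    simp only [Polynomial.finset_sum_coeff] at this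
    have hL : ((Polynomial.X : Polynomial ℚ)^j * (Polynomial.X + 1)^m).coeff (m+1)
        = ((m).choose (m+1-j) : ℚ) := by
      rw [mul_comm, Polynomial.coeff_mul_X_pow', if_pos (by omega), add_comm Polynomial.X 1,
        Polynomial.coeff_one_add_X_pow]
    have hR : ∀ i ∈ range (j+1),
        (Polynomial.C ((-1:ℚ)^(j-i) * (j.choose i : ℚ)) * (Polynomial.X + 1)^(i+m)).coeff (m+1)
          = (-1)^(j-i) * (j.choose i : ℚ) * ((i+m).choose (m+1) : ℚ) := by
      intro i _
      rw [Polynomial.coeff_C_mul, add_comm Polynomial.X 1, Polynomial.coeff_one_add_X_pow]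
    rw [hL, Finset.sum_congr rfl hR] at this
    have e1 : ∀ i, i + (m+1) - 1 = i + m := by omega
    have e2 : m + 1 - 1 = m := by omega
    have e3 : m + 1 - j = m + 1 - j := rfl
    simp only [e1, e2]
    rw [← this]

lemma Tsum_zero (j l : ℕ) (h : l < j) :
    ∑ i ∈ range (j+1), (-1)^(j-i) * (j.choose i : ℚ) * (i:ℚ)^l = 0 := by
  have h1 := coeff_exp_sub_one_pow j l
  have h2 := coeff_exp_sub_one_pow_zero j l h
  rw [h2] at h1
  have hl : (l.factorial : ℚ) ≠ 0 := Nat.cast_ne_zero.2 (Nat.factorial_ne_zero l)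
  field_simp at h1
  linarith [h1]

lemma claimA (n j : ℕ) (hj : j ≤ n) :
    ∑ l ∈ range (n+1), (-1)^l * stirling1 n l
        * (∑ i ∈ range (j+1), (-1)^(j-i) * (j.choose i : ℚ) * (i:ℚ)^l)
      = (-1)^n * (n.factorial : ℚ) * ((n-1).choose (n-j) : ℚ) := by
  calc ∑ l ∈ range (n+1), (-1)^l * stirling1 n l
        * (∑ i ∈ range (j+1), (-1)^(j-i) * (j.choose i : ℚ) * (i:ℚ)^l)
      = ∑ l ∈ range (n+1), ∑ i ∈ range (j+1),
          (-1)^(j-i) * (j.choose i : ℚ) * (stirling1 n l * (-(i:ℚ))^l) := by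
        apply Finset.sum_congr rfl
        intro l _
        rw [Finset.mul_sum]
        apply Finset.sum_congr rfl
        intro i _
        rw [neg_pow]
        ring
    _ = ∑ i ∈ range (j+1), ∑ l ∈ range (n+1),
          (-1)^(j-i) * (j.choose i : ℚ) * (stirling1 n l * (-(i:ℚ))^l) := Finset.sum_comm
    _ = ∑ i ∈ range (j+1), (-1)^(j-i) * (j.choose i : ℚ)
          * ((-1)^n * (n.factorial : ℚ) * ((i+n-1).choose n : ℚ)) := by
        apply Finset.sum_congr rfl
        intro i _
        rw [← Finset.mul_sum, stirling1_eval]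
        have : ∏ r ∈ range n, (-(i:ℚ) - r) = (-1)^n * ∏ r ∈ range n, ((i:ℚ) + r) := by
          rw [show ((-1:ℚ))^n = ∏ _r ∈ range n, (-1:ℚ) by rw [Finset.prod_const]; simp,
            ← Finset.prod_mul_distrib]
          apply Finset.prod_congr rfl
          intro r _
          ring
        rw [this, prod_asc]
        ring
    _ = (-1)^n * (n.factorial : ℚ)
          * ∑ i ∈ range (j+1), (-1)^(j-i) * (j.choose i : ℚ) * ((i+n-1).choose n : ℚ) := by
        rw [Finset.mul_sum]
        apply Finset.sum_congr rfl
        intro i _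
        ring
    _ = (-1)^n * (n.factorial : ℚ) * ((n-1).choose (n-j) : ℚ) := by rw [claimC n j hj]

theorem changhee2_eq_stirling1_euler (n : ℕ) (k : ℕ) (hk : 0 < k) :
    ChhN k n = ∑ l ∈ Finset.range (n+1), (-1)^l * stirling1 n l * EulerN k l := by
  have hrhs : ∑ l ∈ Finset.range (n+1), (-1)^l * stirling1 n l * EulerN k l
      = ∑ j ∈ range (n+1), cc k j * (2⁻¹:ℚ)^j
          * ((-1)^n * (n.factorial : ℚ) * ((n-1).choose (n-j) : ℚ)) := by
    calc ∑ l ∈ Finset.range (n+1), (-1)^l * stirling1 n l * EulerN k l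
        = ∑ l ∈ range (n+1), ∑ j ∈ range (n+1),
            cc k j * (2⁻¹:ℚ)^j * ((-1)^l * stirling1 n l
              * (∑ i ∈ range (j+1), (-1)^(j-i) * (j.choose i : ℚ) * (i:ℚ)^l)) := by
          apply Finset.sum_congr rfl
          intro l hl
          have hln : l ≤ n := Nat.lt_succ_iff.1 (Finset.mem_range.1 hl)
          rw [EulerN_eq]
          have hext : ∑ j ∈ range (l+1), cc k j * (2⁻¹:ℚ)^j
              * (∑ i ∈ range (j+1), (-1)^(j-i) * (j.choose i : ℚ) * (i:ℚ)^l)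
            = ∑ j ∈ range (n+1), cc k j * (2⁻¹:ℚ)^j
              * (∑ i ∈ range (j+1), (-1)^(j-i) * (j.choose i : ℚ) * (i:ℚ)^l) := by
            apply Finset.sum_subset
            · exact Finset.range_subset_range.2 (by omega)
            · intro j _ hjl
              have hlj : l < j := by
                simp only [Finset.mem_range] at hjl
                omega
              rw [Tsum_zero j l hlj, mul_zero]
          rw [hext, Finset.mul_sum]
          apply Finset.sum_congr rfl
          intro j _
          ring
      _ = ∑ j ∈ range (n+1), cc k j * (2⁻¹:ℚ)^j
            * (∑ l ∈ range (n+1), (-1)^l * stirling1 n l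
              * (∑ i ∈ range (j+1), (-1)^(j-i) * (j.choose i : ℚ) * (i:ℚ)^l)) := by
          rw [Finset.sum_comm]
          apply Finset.sum_congr rfl
          intro j _
          rw [Finset.mul_sum]
      _ = ∑ j ∈ range (n+1), cc k j * (2⁻¹:ℚ)^j
            * ((-1)^n * (n.factorial : ℚ) * ((n-1).choose (n-j) : ℚ)) := by
          apply Finset.sum_congr rfl
          intro j hj
          rw [claimA n j (Nat.lt_succ_iff.1 (Finset.mem_range.1 hj))]
  rw [hrhs, ChhN_eq]
  apply Finset.sum_congr rfl
  intro j hj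
  have hjn : j ≤ n := Nat.lt_succ_iff.1 (Finset.mem_range.1 hj)
  have hsign : ((-2⁻¹:ℚ))^j * (-1:ℚ)^(n-j) = (2⁻¹:ℚ)^j * (-1:ℚ)^n := by
    rw [neg_pow]
    have : (-1:ℚ)^j * (-1:ℚ)^(n-j) = (-1:ℚ)^n := by
      rw [← pow_add]
      congr 1
      omega
    calc (-1:ℚ)^j * (2⁻¹:ℚ)^j * (-1:ℚ)^(n-j) = (2⁻¹:ℚ)^j * ((-1:ℚ)^j * (-1:ℚ)^(n-j)) := by ring
      _ = (2⁻¹:ℚ)^j * (-1:ℚ)^n := by rw [this]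
  calc (n.factorial : ℚ) * cc k j * (-2⁻¹)^j * ((-1)^(n-j) * (((n-1).choose (n-j)) : ℚ))
      = cc k j * ((-2⁻¹:ℚ)^j * (-1:ℚ)^(n-j)) * (n.factorial : ℚ) * (((n-1).choose (n-j)) : ℚ) := by
        ring
    _ = cc k j * ((2⁻¹:ℚ)^j * (-1:ℚ)^n) * (n.factorial : ℚ) * (((n-1).choose (n-j)) : ℚ) := by
        rw [hsign]
    _ = cc k j * (2⁻¹:ℚ)^j * ((-1)^n * (n.factorial : ℚ) * ((n-1).choose (n-j) : ℚ)) := by ring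
end

section
/- For all nonnegative integers m and positive integers k, E_m^{(k)}(k) = Σ_{n=0}^{m} Ĉh_n^{(k)} S_2(m,n), where E_m^{(k)}(x) are the higher-order Euler polynomials evaluated at x = k. -/
open PowerSeries Finset

lemma coeff_mul_congr (c a b : PowerSeries ℚ) (d : ℕ)
    (h : ∀ i ≤ d, coeff i a = coeff i b) :
    coeff d (c * a) = coeff d (c * b) := by
  rw [coeff_mul, coeff_mul]
  refine Finset.sum_congr rfl fun p hp => ?_
  rw [Finset.HasAntidiagonal.mem_antidiagonal] at hp
  rw [h p.2 (by omega)]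

lemma constCoeff_two_add_X : constantCoeff (2 + PowerSeries.X : PowerSeries ℚ) = 2 := by simp; rfl

lemma constCoeff_exp_add_one : constantCoeff (exp ℚ + 1) = 2 := by
  simp [PowerSeries.constantCoeff_exp]; norm_num

lemma idA (k : ℕ) :
    (2 + PowerSeries.X : PowerSeries ℚ)^k *
      ((2*(2+PowerSeries.X : PowerSeries ℚ)⁻¹)^k * (1+PowerSeries.X)^k)
    = 2^k * (1+PowerSeries.X)^k := by
  rw [← mul_assoc, ← mul_pow]
  have : (2 + PowerSeries.X : PowerSeries ℚ) * (2*(2+PowerSeries.X)⁻¹)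
      = 2 * ((2+PowerSeries.X) * (2+PowerSeries.X)⁻¹) := by ring
  rw [this, PowerSeries.mul_inv_cancel _ (by rw [constCoeff_two_add_X]; norm_num), mul_one]

lemma idB (k : ℕ) :
    (exp ℚ + 1)^k * ((2*(exp ℚ + 1)⁻¹)^k * rescale (k:ℚ) (exp ℚ))
    = 2^k * (exp ℚ)^k := by
  rw [← PowerSeries.exp_pow_eq_rescale_exp, ← mul_assoc, ← mul_pow]
  have : (exp ℚ + 1) * (2*(exp ℚ + 1)⁻¹) = 2 * ((exp ℚ + 1) * (exp ℚ + 1)⁻¹) := by ring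
  rw [this, PowerSeries.mul_inv_cancel _ (by rw [constCoeff_exp_add_one]; norm_num), mul_one]

theorem main (m : ℕ) (k : ℕ) :
    coeff m ((2*(exp ℚ + 1)⁻¹)^k * rescale (k:ℚ) (exp ℚ))
    = ∑ n ∈ Finset.range (m+1),
        coeff n ((2*(2+PowerSeries.X : PowerSeries ℚ)⁻¹)^k * (1+PowerSeries.X)^k)
          * coeff m ((exp ℚ - 1)^n) := by
  classical
  set g : PowerSeries ℚ := exp ℚ - 1 with hg
  set F : PowerSeries ℚ := (2*(2+PowerSeries.X : PowerSeries ℚ)⁻¹)^k * (1+PowerSeries.X)^k with hF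
  set L : PowerSeries ℚ := (2*(exp ℚ + 1)⁻¹)^k * rescale (k:ℚ) (exp ℚ) with hL
  set P : Polynomial ℚ := ∑ n ∈ Finset.range (m+1), Polynomial.C (coeff n F) * Polynomial.X^n
    with hP
  -- coefficients of P
  have hPcoeff : ∀ j ≤ m, P.coeff j = coeff j F := by
    intro j hj
    rw [hP, Polynomial.finset_sum_coeff]
    simp only [Polynomial.coeff_C_mul, Polynomial.coeff_X_pow, mul_ite, mul_one, mul_zero]
    rw [Finset.sum_eq_single j (fun n _ hne => by simp [Ne.symm hne]) (fun h => by
      simp at h; omega)]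
    simp
  -- P as power series agrees with F up to m
  have hPcoe : ∀ j ≤ m, coeff j (P : PowerSeries ℚ) = coeff j F := by
    intro j hj; rw [Polynomial.coeff_coe, hPcoeff j hj]
  -- polynomial divisibility
  have hdvd : (Polynomial.X : Polynomial ℚ)^(m+1) ∣
      (2 + Polynomial.X)^k * P - Polynomial.C (2^k) * (1+Polynomial.X)^k := by
    rw [Polynomial.X_pow_dvd_iff]
    intro d hd
    have hd' : d ≤ m := by omega
    rw [Polynomial.coeff_sub, sub_eq_zero]
    have h1 : ((2 + Polynomial.X : Polynomial ℚ)^k * P).coeff d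
        = coeff d ((2+PowerSeries.X : PowerSeries ℚ)^k * (P : PowerSeries ℚ)) := by
      rw [← Polynomial.coeff_coe, Polynomial.coe_mul, Polynomial.coe_pow, Polynomial.coe_add,
        ← map_ofNat (Polynomial.C : ℚ →+* Polynomial ℚ) 2, Polynomial.coe_C,
        map_ofNat (PowerSeries.C) 2, Polynomial.coe_X]
    have h2 : ((Polynomial.C (2^k : ℚ)) * (1+Polynomial.X)^k).coeff d
        = coeff d ((2^k : PowerSeries ℚ) * (1+PowerSeries.X)^k) := by
      rw [← Polynomial.coeff_coe, Polynomial.coe_mul, Polynomial.coe_pow, Polynomial.coe_add,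
        Polynomial.coe_C, Polynomial.coe_X, Polynomial.coe_one, map_pow,
        map_ofNat (PowerSeries.C) 2]
    rw [h1, h2, coeff_mul_congr _ _ F d (fun i hi => hPcoe i (le_trans hi hd'))]
    rw [hF, idA k]
  -- substitute g
  obtain ⟨E, hE⟩ := hdvd
  have haevalE := congrArg (Polynomial.aeval g) hE
  simp only [map_sub, map_mul, map_pow, map_add, Polynomial.aeval_X, Polynomial.aeval_C,
    map_one, map_ofNat, PowerSeries.algebraMap_apply, Algebra.algebraMap_self_apply] at haevalE
  have hgX : (PowerSeries.X : PowerSeries ℚ) ∣ g := by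
    rw [PowerSeries.X_dvd_iff, hg, map_sub, PowerSeries.constantCoeff_exp]; simp
  have h2exp : (2 : PowerSeries ℚ) + g = exp ℚ + 1 := by rw [hg]; ring
  have h1exp : (1 : PowerSeries ℚ) + g = exp ℚ := by rw [hg]; ring
  rw [h2exp, h1exp] at haevalE
  -- the key congruence mod X^{m+1}
  have hmod : ∀ j ≤ m,
      coeff j ((exp ℚ + 1)^k * Polynomial.aeval g P - (exp ℚ + 1)^k * L) = 0 := by
    intro j hj
    rw [map_sub, sub_eq_zero]
    have hLside : coeff j ((exp ℚ + 1)^k * L) = coeff j ((2^k : PowerSeries ℚ) * (exp ℚ)^k) := by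
      rw [hL, idB k]
    rw [hLside]
    have : (exp ℚ + 1)^k * Polynomial.aeval g P
        = (2^k : PowerSeries ℚ) * (exp ℚ)^k + g^(m+1) * Polynomial.aeval g E := by
      rw [← haevalE]; ring
    rw [this, map_add]
    have : coeff j (g^(m+1) * Polynomial.aeval g E) = 0 := by
      apply PowerSeries.X_pow_dvd_iff.mp (dvd_mul_of_dvd_left (pow_dvd_pow_of_dvd hgX (m+1)) _)
      omega
    rw [this, add_zero]
  -- cancel the unit (exp+1)^k
  have hdvd2 : (PowerSeries.X : PowerSeries ℚ)^(m+1) ∣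
      (exp ℚ + 1)^k * (Polynomial.aeval g P - L) := by
    rw [PowerSeries.X_pow_dvd_iff]
    intro j hj
    rw [mul_sub]
    exact hmod j (by omega)
  obtain ⟨W, hW⟩ := hdvd2
  have hcancel : Polynomial.aeval g P - L
      = ((exp ℚ + 1)⁻¹)^k * (PowerSeries.X^(m+1) * W) := by
    rw [← hW, ← mul_assoc, ← mul_pow, mul_comm ((exp ℚ + 1)⁻¹) _,
      PowerSeries.mul_inv_cancel _ (by rw [constCoeff_exp_add_one]; norm_num), one_pow, one_mul]
  have hfinal : coeff m (Polynomial.aeval g P - L) = 0 := by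
    rw [hcancel, mul_comm (((exp ℚ + 1)⁻¹)^k) _, mul_assoc]
    exact PowerSeries.X_pow_dvd_iff.mp (dvd_mul_right _ _) m (by omega)
  rw [map_sub, sub_eq_zero] at hfinal
  rw [← hfinal, hP]
  rw [map_sum]
  rw [map_sum]
  refine Finset.sum_congr rfl fun n hn => ?_
  rw [map_mul, map_pow, Polynomial.aeval_X, Polynomial.aeval_C,
    PowerSeries.algebraMap_apply, Algebra.algebraMap_self_apply, PowerSeries.coeff_C_mul]


theorem euler_at_k_eq_changhee2_stirling2 (m : ℕ) (k : ℕ) (hk : 0 < k) :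
    EulerP k (k : ℚ) m = ∑ n ∈ Finset.range (m+1), ChhN k n * stirling2 m n := by
  rw [EulerP, main m k]
  rw [Finset.mul_sum]
  refine Finset.sum_congr rfl fun n hn => ?_
  rw [ChhN, stirling2]
  have hn0 : (n.factorial : ℚ) ≠ 0 := by exact_mod_cast n.factorial_ne_zero
  field_simp
end

section
/- For all positive integers n and k, and any x, (-1)^n Ĉh_n^{(k)}(x)/n! = Σ_{m=1}^{n} binomial(n-1, n-m) Ch_m^{(k)}(-x)/m!, an inversion relation between Changhee polynomials of the first and second kind of order k. -/
open PowerSeries Finset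

lemma gbinom_zero (x : ℚ) : gbinom x 0 = 1 := by simp [gbinom]

lemma gbinom_succ (x : ℚ) (m : ℕ) :
    gbinom x (m+1) * ((m:ℚ)+1) = gbinom x m * (x - m) := by
  unfold gbinom
  rw [Finset.prod_range_succ, Nat.factorial_succ]
  push_cast
  field_simp

lemma gbinom_vandermonde (n : ℕ) : ∀ u v : ℚ,
    ∑ i ∈ Finset.range (n+1), gbinom u i * gbinom v (n - i) = gbinom (u + v) n := by
  induction n with
  | zero => intro u v; simp [gbinom_zero]
  | succ n ih =>
    intro u v
    have hne : ((n:ℚ)+1) ≠ 0 := by positivity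
    apply mul_left_cancel₀ hne
    have split : ∀ i ∈ Finset.range (n+2),
        ((n:ℚ)+1) * (gbinom u i * gbinom v (n+1-i))
          = (i:ℚ) * (gbinom u i * gbinom v (n+1-i))
            + ((n+1-i : ℕ):ℚ) * (gbinom u i * gbinom v (n+1-i)) := by
      intro i hi
      have hi' : i ≤ n+1 := Nat.lt_succ_iff.1 (Finset.mem_range.1 hi)
      rw [← add_mul]
      congr 1
      push_cast [Nat.cast_sub hi']
      ring
    rw [Finset.mul_sum, Finset.sum_congr rfl split, Finset.sum_add_distrib]
    have h1 : ∑ i ∈ Finset.range (n+2), (i:ℚ) * (gbinom u i * gbinom v (n+1-i))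
        = ∑ i ∈ Finset.range (n+1), (u - i) * (gbinom u i * gbinom v (n-i)) := by
      rw [Finset.sum_range_succ']
      simp only [Nat.cast_zero, zero_mul, add_zero]
      refine Finset.sum_congr rfl fun i hi => ?_
      have : (n+1) - (i+1) = n - i := by omega
      rw [this]
      have := gbinom_succ u i
      push_cast
      calc ((i:ℚ)+1) * (gbinom u (i+1) * gbinom v (n-i))
          = (gbinom u (i+1) * ((i:ℚ)+1)) * gbinom v (n-i) := by ring
        _ = (gbinom u i * (u - i)) * gbinom v (n-i) := by rw [this]
        _ = (u - i) * (gbinom u i * gbinom v (n-i)) := by ring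
    have h2 : ∑ i ∈ Finset.range (n+2), ((n+1-i : ℕ):ℚ) * (gbinom u i * gbinom v (n+1-i))
        = ∑ i ∈ Finset.range (n+1), (v - ((n:ℚ)-i)) * (gbinom u i * gbinom v (n-i)) := by
      rw [Finset.sum_range_succ]
      simp only [Nat.sub_self, Nat.cast_zero, zero_mul, add_zero]
      refine Finset.sum_congr rfl fun i hi => ?_
      have hi' : i ≤ n := Nat.lt_succ_iff.1 (Finset.mem_range.1 hi)
      have e1 : n + 1 - i = (n - i) + 1 := by omega
      rw [e1]
      have habs := gbinom_succ v (n-i)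
      have e2 : (((n-i : ℕ) : ℚ)+1) = ((n - i + 1 : ℕ) : ℚ) := by push_cast; ring
      have e3 : ((n - i : ℕ) : ℚ) = (n:ℚ) - i := by
        rw [Nat.cast_sub hi']
      calc ((n - i + 1 : ℕ) : ℚ) * (gbinom u i * gbinom v (n-i+1))
          = (gbinom v ((n-i)+1) * (((n-i:ℕ):ℚ)+1)) * gbinom u i := by
            rw [e2]; ring
        _ = (gbinom v (n-i) * (v - ((n-i:ℕ):ℚ))) * gbinom u i := by rw [habs]
        _ = (v - ((n:ℚ)-i)) * (gbinom u i * gbinom v (n-i)) := by rw [e3]; ring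
    rw [h1, h2, ← Finset.sum_add_distrib]
    have : ∀ i ∈ Finset.range (n+1),
        (u - i) * (gbinom u i * gbinom v (n-i)) + (v - ((n:ℚ)-i)) * (gbinom u i * gbinom v (n-i))
        = (u + v - n) * (gbinom u i * gbinom v (n-i)) := by
      intro i _; ring
    rw [Finset.sum_congr rfl this, ← Finset.mul_sum, ih u v]
    have := gbinom_succ (u+v) n
    calc (u + v - n) * gbinom (u+v) n = gbinom (u+v) (n+1) * ((n:ℚ)+1) := by rw [this]; ring
      _ = ((n:ℚ)+1) * gbinom (u+v) (n+1) := by ring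


/-- reflection -/
lemma gbinom_reflect (x : ℚ) (n : ℕ) :
    gbinom (-x) n = (-1)^n * gbinom (x + n - 1) n := by
  unfold gbinom
  rw [mul_div_assoc']
  congr 1
  have h1 : (∏ i ∈ Finset.range n, (-x - (i:ℚ))) = (-1)^n * ∏ i ∈ Finset.range n, (x + i) := by
    have : ∀ i ∈ Finset.range n, -x - (i:ℚ) = (-1) * (x + i) := fun i _ => by ring
    rw [Finset.prod_congr rfl this, Finset.prod_mul_distrib, Finset.prod_const,
      Finset.card_range]
  have h2 : (∏ i ∈ Finset.range n, (x + (n:ℚ) - 1 - i)) = ∏ i ∈ Finset.range n, (x + i) := by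
    rw [← Finset.prod_range_reflect (fun i => x + (i:ℚ)) n]
    refine Finset.prod_congr rfl fun i hi => ?_
    have hi' : i < n := Finset.mem_range.1 hi
    have : ((n - 1 - i : ℕ) : ℚ) = (n:ℚ) - 1 - i := by
      have : i ≤ n - 1 := by omega
      push_cast [Nat.cast_sub this, Nat.cast_sub (by omega : 1 ≤ n)]
      ring
    rw [this]; ring
  rw [h1, h2]

/-- trinomial revision -/
lemma gbinom_trinomial (z : ℚ) (i j : ℕ) (h : j ≤ i) :
    gbinom z j * gbinom (z - j) (i - j) = gbinom z i * (i.choose j : ℚ) := by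
  unfold gbinom
  have hsplit : (∏ a ∈ Finset.range i, (z - a))
      = (∏ a ∈ Finset.range j, (z - a)) * ∏ b ∈ Finset.range (i-j), (z - (j:ℚ) - b) := by
    have := Finset.prod_range_add (fun a => z - (a:ℚ)) j (i-j)
    rw [Nat.add_sub_cancel' h] at this
    rw [this]
    congr 1
    refine Finset.prod_congr rfl fun b _ => by push_cast; ring
  rw [Nat.cast_choose ℚ h, hsplit]
  have h1 : (j.factorial : ℚ) ≠ 0 := by exact_mod_cast j.factorial_ne_zero
  have h2 : ((i-j).factorial : ℚ) ≠ 0 := by exact_mod_cast (i-j).factorial_ne_zero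
  have h3 : (i.factorial : ℚ) ≠ 0 := by exact_mod_cast i.factorial_ne_zero
  field_simp

/-- gbinom at naturals is choose -/
lemma gbinom_natCast (N m : ℕ) : gbinom (N : ℚ) m = (N.choose m : ℚ) := by
  rcases le_or_gt m N with h | h
  · unfold gbinom
    rw [Nat.cast_choose ℚ h]
    have key : (∏ i ∈ Finset.range m, ((N:ℚ) - i)) * (N - m).factorial = N.factorial := by
      have : (∏ i ∈ Finset.range m, ((N:ℚ) - i)) = ((N.descFactorial m : ℕ) : ℚ) := by
        rw [Nat.descFactorial_eq_prod_range]
        push_cast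
        refine Finset.prod_congr rfl fun i hi => ?_
        have : i < m := Finset.mem_range.1 hi
        rw [Nat.cast_sub (by omega)]
      rw [this]
      rw [← Nat.cast_mul]
      norm_cast
      rw [mul_comm]
      exact Nat.factorial_mul_descFactorial h  -- guess name
    have h2 : ((N-m).factorial : ℚ) ≠ 0 := by exact_mod_cast (N-m).factorial_ne_zero
    have h3 : (m.factorial : ℚ) ≠ 0 := by exact_mod_cast m.factorial_ne_zero
    field_simp
    linear_combination key
  · rw [Nat.choose_eq_zero_of_lt h]
    unfold gbinom
    rw [Finset.prod_eq_zero (Finset.mem_range.2 h) (by simp)]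
    simp


/-- key identity (C) -/
lemma keyC (k M : ℕ) :
    ∑ i ∈ Finset.range (M+1), (-1/2 : ℚ)^i * gbinom (-(k:ℚ)) i * gbinom (-(i:ℚ)) (M-i)
      = ∑ i ∈ Finset.range (M+1), (1/2 : ℚ)^i * gbinom (-(k:ℚ)) i * gbinom (k:ℚ) (M-i) := by
  symm
  have hpow : ∀ i : ℕ, (1/2 : ℚ)^i
      = ∑ j ∈ Finset.range (i+1), (-1/2 : ℚ)^j * (i.choose j : ℚ) := by
    intro i
    rw [show (1/2 : ℚ) = (-1/2 : ℚ) + 1 by norm_num, add_pow (-1/2 : ℚ) 1 i]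
    refine Finset.sum_congr rfl fun j _ => by rw [one_pow]; ring
  calc ∑ i ∈ Finset.range (M+1), (1/2 : ℚ)^i * gbinom (-(k:ℚ)) i * gbinom (k:ℚ) (M-i)
      = ∑ i ∈ Finset.range (M+1), ∑ j ∈ Finset.range (M+1),
          (-1/2 : ℚ)^j * (i.choose j : ℚ) * gbinom (-(k:ℚ)) i * gbinom (k:ℚ) (M-i) := by
        refine Finset.sum_congr rfl fun i hi => ?_
        have hi' : i ≤ M := Nat.lt_succ_iff.1 (Finset.mem_range.1 hi)
        rw [hpow i, Finset.sum_mul, Finset.sum_mul]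
        refine Finset.sum_subset (Finset.range_subset_range.2 (by omega)) fun j _ hj => ?_
        have : i < j := by
          simp only [Finset.mem_range, not_lt] at hj; omega
        rw [Nat.choose_eq_zero_of_lt this]
        simp
    _ = ∑ j ∈ Finset.range (M+1), ∑ i ∈ Finset.range (M+1),
          (-1/2 : ℚ)^j * (i.choose j : ℚ) * gbinom (-(k:ℚ)) i * gbinom (k:ℚ) (M-i) :=
        Finset.sum_comm
    _ = ∑ j ∈ Finset.range (M+1), (-1/2 : ℚ)^j * gbinom (-(k:ℚ)) j * gbinom (-(j:ℚ)) (M-j) := by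
        refine Finset.sum_congr rfl fun j hj => ?_
        have hj' : j ≤ M := Nat.lt_succ_iff.1 (Finset.mem_range.1 hj)
        have hsplit : Finset.range (M+1) = Finset.range j ∪ Finset.Ico j (M+1) := by
          rw [Finset.range_eq_Ico, Finset.range_eq_Ico, Finset.Ico_union_Ico_eq_Ico (by omega) (by omega)]
        rw [hsplit, Finset.sum_union (by
          rw [Finset.range_eq_Ico]
          exact Finset.Ico_disjoint_Ico_consecutive 0 j (M+1))]
        have hz : ∑ i ∈ Finset.range j,
            (-1/2 : ℚ)^j * (i.choose j : ℚ) * gbinom (-(k:ℚ)) i * gbinom (k:ℚ) (M-i) = 0 := by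
          refine Finset.sum_eq_zero fun i hi => ?_
          rw [Nat.choose_eq_zero_of_lt (Finset.mem_range.1 hi)]
          simp
        rw [hz, zero_add, Finset.sum_Ico_eq_sum_range]
        have hMj : M + 1 - j = (M - j) + 1 := by omega
        rw [hMj]
        have step : ∀ i ∈ Finset.range ((M-j)+1),
            (-1/2 : ℚ)^j * ((j+i).choose j : ℚ) * gbinom (-(k:ℚ)) (j+i) * gbinom (k:ℚ) (M-(j+i))
            = ((-1/2 : ℚ)^j * gbinom (-(k:ℚ)) j) *
                (gbinom (-(k:ℚ) - j) i * gbinom (k:ℚ) ((M-j) - i)) := by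
          intro i hi
          have hi' : i ≤ M - j := Nat.lt_succ_iff.1 (Finset.mem_range.1 hi)
          have ht := gbinom_trinomial (-(k:ℚ)) (j+i) j (Nat.le_add_right j i)
          rw [Nat.add_sub_cancel_left] at ht
          have e : M - (j+i) = (M - j) - i := by omega
          rw [e]
          linear_combination (-(-1/2 : ℚ)^j * gbinom (k:ℚ) ((M-j)-i)) * ht
        rw [Finset.sum_congr rfl step, ← Finset.mul_sum,
          gbinom_vandermonde (M-j) (-(k:ℚ) - j) (k:ℚ)]
        have : -(k:ℚ) - j + k = -(j:ℚ) := by ring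
        rw [this, mul_assoc]


lemma coeff_onePlusXPow (y : ℚ) (m : ℕ) :
    PowerSeries.coeff m (onePlusXPow y) = gbinom y m := by
  simp [onePlusXPow]

lemma gbinom_zero' (x : ℚ) : gbinom x 0 = 1 := by simp [gbinom]

lemma gbinom_zero_left (m : ℕ) (h : 0 < m) : gbinom 0 m = 0 := by
  unfold gbinom
  rw [Finset.prod_eq_zero (Finset.mem_range.2 h) (by simp)]
  simp

lemma onePlusXPow_mul (u v : ℚ) :
    onePlusXPow u * onePlusXPow v = onePlusXPow (u + v) := by
  ext n
  rw [PowerSeries.coeff_mul, Finset.Nat.sum_antidiagonal_eq_sum_range_succ_mk,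
    coeff_onePlusXPow]
  rw [← gbinom_vandermonde n u v]
  refine Finset.sum_congr rfl fun i _ => ?_
  rw [coeff_onePlusXPow, coeff_onePlusXPow]

lemma onePlusXPow_zero : onePlusXPow 0 = 1 := by
  ext n
  rw [coeff_onePlusXPow, PowerSeries.coeff_one]
  rcases Nat.eq_zero_or_pos n with h | h
  · simp [h, gbinom_zero']
  · rw [gbinom_zero_left n h, if_neg (by omega)]

lemma onePlusXPow_one : onePlusXPow 1 = 1 + PowerSeries.X := by
  ext n
  rw [coeff_onePlusXPow, map_add, PowerSeries.coeff_one, PowerSeries.coeff_X]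
  match n with
  | 0 => simp [gbinom_zero']
  | 1 => norm_num [gbinom]
  | (m+2) =>
    have : gbinom 1 (m+2) = 0 := by
      unfold gbinom
      rw [Finset.prod_eq_zero (i := 1) (Finset.mem_range.2 (by omega)) (by norm_num)]
      simp
    simp [this]

lemma onePlusXPow_pow (c : ℚ) (j : ℕ) :
    (onePlusXPow c)^j = onePlusXPow (j * c) := by
  induction j with
  | zero => simp [onePlusXPow_zero]
  | succ j ih =>
    rw [pow_succ, ih, onePlusXPow_mul]
    congr 1
    push_cast
    ring


lemma two_add_X_mul : ((2 + PowerSeries.X : PowerSeries ℚ)) * PowerSeries.rescale (1/2) (onePlusXPow (-1)) = 2 := by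
  have h1 : (2 + PowerSeries.X : PowerSeries ℚ) = 2 * PowerSeries.rescale (1/2) (onePlusXPow 1) := by
    rw [onePlusXPow_one, map_add, map_one, PowerSeries.rescale_X]
    have : (2 : PowerSeries ℚ) = PowerSeries.C 2 := by
      rw [map_ofNat]
    rw [this, mul_add, mul_one, ← mul_assoc, ← map_mul]
    norm_num
  rw [h1, mul_assoc, ← map_mul, onePlusXPow_mul]
  norm_num [onePlusXPow_zero]

lemma constCoeff_two_add_X_s14 : PowerSeries.constantCoeff (2 + PowerSeries.X : PowerSeries ℚ) ≠ 0 := by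
  rw [map_add, PowerSeries.constantCoeff_X, map_ofNat]
  norm_num

lemma A_eq (k : ℕ) :
    (2 * (2 + PowerSeries.X : PowerSeries ℚ)⁻¹)^k
      = PowerSeries.rescale (1/2) (onePlusXPow (-(k:ℚ))) := by
  have h2 : (2 * (2 + PowerSeries.X : PowerSeries ℚ)⁻¹)
      = PowerSeries.rescale (1/2) (onePlusXPow (-1)) := by
    calc (2 : PowerSeries ℚ) * (2 + PowerSeries.X)⁻¹
        = ((2 + PowerSeries.X) * PowerSeries.rescale (1/2) (onePlusXPow (-1)))
            * (2 + PowerSeries.X)⁻¹ := by rw [two_add_X_mul]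
      _ = PowerSeries.rescale (1/2) (onePlusXPow (-1))
            * ((2 + PowerSeries.X) * (2 + PowerSeries.X)⁻¹) := by ring
      _ = PowerSeries.rescale (1/2) (onePlusXPow (-1)) := by
          rw [PowerSeries.mul_inv_cancel _ constCoeff_two_add_X_s14, mul_one]
  rw [h2, ← map_pow, onePlusXPow_pow]
  norm_num


lemma coeff_mul_congr_s14 (n : ℕ) (P Q R : PowerSeries ℚ)
    (h : ∀ m ≤ n, PowerSeries.coeff m P = PowerSeries.coeff m Q) :
    PowerSeries.coeff n (P * R) = PowerSeries.coeff n (Q * R) := by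
  rw [PowerSeries.coeff_mul, PowerSeries.coeff_mul]
  refine Finset.sum_congr rfl fun p hp => ?_
  rw [h p.1 (Finset.HasAntidiagonal.antidiagonal.fst_le hp)]

lemma coeff_rescale_mul (z y : ℚ) (n : ℕ) :
    PowerSeries.coeff n (PowerSeries.rescale (1/2) (onePlusXPow z) * onePlusXPow y)
      = ∑ i ∈ Finset.range (n+1), (1/2 : ℚ)^i * gbinom z i * gbinom y (n-i) := by
  rw [PowerSeries.coeff_mul, Finset.Nat.sum_antidiagonal_eq_sum_range_succ_mk]
  refine Finset.sum_congr rfl fun i _ => ?_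
  rw [PowerSeries.coeff_rescale, coeff_onePlusXPow, coeff_onePlusXPow, mul_assoc]

lemma main_identity (n k : ℕ) (x : ℚ) :
    PowerSeries.coeff n
        (PowerSeries.rescale (1/2) (onePlusXPow (-(k:ℚ))) * onePlusXPow ((n:ℚ)-1-x))
      = (-1)^n * PowerSeries.coeff n
        (PowerSeries.rescale (1/2) (onePlusXPow (-(k:ℚ))) * onePlusXPow (x+k)) := by
  set y : ℚ := (n:ℚ)-1-x with hy
  set c : ℕ → ℚ := fun i => (-1/2 : ℚ)^i * gbinom (-(k:ℚ)) i with hc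
  -- Step R : RHS as a sum
  have stepR : (-1 : ℚ)^n * PowerSeries.coeff n
        (PowerSeries.rescale (1/2) (onePlusXPow (-(k:ℚ))) * onePlusXPow (x+k))
      = ∑ i ∈ Finset.range (n+1), c i * gbinom (y - k - i) (n-i) := by
    rw [coeff_rescale_mul, Finset.mul_sum]
    refine Finset.sum_congr rfl fun i hi => ?_
    have hi' : i ≤ n := Nat.lt_succ_iff.1 (Finset.mem_range.1 hi)
    have hcast : ((n - i : ℕ) : ℚ) = (n:ℚ) - i := by rw [Nat.cast_sub hi']
    have hrefl : gbinom (x+k) (n-i) = (-1:ℚ)^(n-i) * gbinom (y - k - i) (n-i) := by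
      have := gbinom_reflect (-(x+(k:ℚ))) (n-i)
      rw [neg_neg] at this
      rw [this, hcast]
      rw [hy]; ring_nf
    rw [hrefl]
    have hsign : (-1:ℚ)^n * (-1:ℚ)^(n-i) = (-1:ℚ)^i := by
      rw [← pow_add]
      have : n + (n-i) = 2*(n-i) + i := by omega
      rw [this, pow_add, pow_mul]
      norm_num
    have hneg : (-1/2 : ℚ)^i = (-1:ℚ)^i * (1/2:ℚ)^i := by
      rw [← mul_pow]; norm_num
    simp only [hc, hneg]
    calc (-1:ℚ)^n * ((1/2:ℚ)^i * gbinom (-(k:ℚ)) i * ((-1:ℚ)^(n-i) * gbinom (y-k-i) (n-i)))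
        = ((-1:ℚ)^n * (-1:ℚ)^(n-i)) * (1/2:ℚ)^i * gbinom (-(k:ℚ)) i * gbinom (y-k-i) (n-i) := by
          ring
      _ = (-1:ℚ)^i * (1/2:ℚ)^i * gbinom (-(k:ℚ)) i * gbinom (y-k-i) (n-i) := by rw [hsign]
  -- T'
  set T : PowerSeries ℚ := ∑ i ∈ Finset.range (n+1),
      PowerSeries.C (c i) * (PowerSeries.X^i * onePlusXPow (-(i:ℚ))) with hT
  have stepX : ∑ i ∈ Finset.range (n+1), c i * gbinom (y - k - i) (n-i)
      = PowerSeries.coeff n (T * onePlusXPow (y - k)) := by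
    rw [hT, Finset.sum_mul, map_sum]
    refine Finset.sum_congr rfl fun i hi => ?_
    have hi' : i ≤ n := Nat.lt_succ_iff.1 (Finset.mem_range.1 hi)
    have e : PowerSeries.C (c i) * (PowerSeries.X^i * onePlusXPow (-(i:ℚ))) * onePlusXPow (y-k)
        = PowerSeries.C (c i) * (PowerSeries.X^i * (onePlusXPow (-(i:ℚ)) * onePlusXPow (y-k))) := by
      ring
    rw [e, onePlusXPow_mul, show (-(i:ℚ) + (y-(k:ℚ))) = y - k - i from by ring,
      PowerSeries.coeff_C_mul, PowerSeries.coeff_X_pow_mul', if_pos hi', coeff_onePlusXPow]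
  have steplow : ∀ m ≤ n, PowerSeries.coeff m T
      = PowerSeries.coeff m
          (PowerSeries.rescale (1/2) (onePlusXPow (-(k:ℚ))) * onePlusXPow (k:ℚ)) := by
    intro m hm
    rw [hT, map_sum, coeff_rescale_mul, ← keyC k m]
    have h1 : ∀ i ∈ Finset.range (n+1),
        PowerSeries.coeff m (PowerSeries.C (c i) * (PowerSeries.X^i * onePlusXPow (-(i:ℚ))))
        = if i ≤ m then c i * gbinom (-(i:ℚ)) (m-i) else 0 := by
      intro i _
      rw [PowerSeries.coeff_C_mul, PowerSeries.coeff_X_pow_mul']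
      split_ifs with h
      · rw [coeff_onePlusXPow]
      · rw [mul_zero]
    rw [Finset.sum_congr rfl h1]
    rw [← Finset.sum_subset (Finset.range_subset_range.2 (by omega : m+1 ≤ n+1))
      (fun i _ hi => by
        simp only [Finset.mem_range, not_lt] at hi
        rw [if_neg (by omega)])]
    refine Finset.sum_congr rfl fun i hi => ?_
    have hi' : i ≤ m := Nat.lt_succ_iff.1 (Finset.mem_range.1 hi)
    rw [if_pos hi', hc]
  have stepprod : PowerSeries.coeff n (T * onePlusXPow (y - k))
      = PowerSeries.coeff n
          ((PowerSeries.rescale (1/2) (onePlusXPow (-(k:ℚ))) * onePlusXPow (k:ℚ))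
            * onePlusXPow (y - k)) :=
    coeff_mul_congr_s14 n _ _ _ steplow
  rw [stepR, stepX, stepprod, mul_assoc, onePlusXPow_mul]
  norm_num

theorem changhee2_poly_inversion (n k : ℕ) (hn : 0 < n) (hk : 0 < k) (x : ℚ) :
    (-1)^n * ChP2 k x n / n.factorial =
      ∑ m ∈ Finset.Icc 1 n, ((n-1).choose (n-m) : ℚ) * ChP k (-x) m / m.factorial := by
  have hfac : ∀ m : ℕ, (m.factorial : ℚ) ≠ 0 := fun m => by exact_mod_cast m.factorial_ne_zero
  -- simplify LHS
  have hLHS : (-1:ℚ)^n * ChP2 k x n / n.factorial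
      = (-1:ℚ)^n * PowerSeries.coeff n
          ((2 * (2 + PowerSeries.X : PowerSeries ℚ)⁻¹)^k * onePlusXPow (x + k)) := by
    rw [ChP2]
    field_simp
  -- simplify RHS summands
  have hRHS1 : ∀ m : ℕ, ((n-1).choose (n-m) : ℚ) * ChP k (-x) m / m.factorial
      = ((n-1).choose (n-m) : ℚ) * PowerSeries.coeff m
          ((2 * (2 + PowerSeries.X : PowerSeries ℚ)⁻¹)^k * onePlusXPow (-x)) := by
    intro m
    rw [ChP]
    field_simp
  rw [hLHS, Finset.sum_congr rfl (fun m _ => hRHS1 m), A_eq]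
  set c : ℕ → ℚ := fun m => PowerSeries.coeff m
      (PowerSeries.rescale (1/2) (onePlusXPow (-(k:ℚ))) * onePlusXPow (-x)) with hc
  -- extend sum to range (n+1)
  have hext : ∑ m ∈ Finset.Icc 1 n, ((n-1).choose (n-m) : ℚ) * c m
      = ∑ m ∈ Finset.range (n+1), ((n-1).choose (n-m) : ℚ) * c m := by
    rw [Finset.range_eq_Ico,
      Finset.sum_eq_sum_Ico_succ_bot (by omega : 0 < n+1)
        (fun m => ((n-1).choose (n-m) : ℚ) * c m)]
    rw [Nat.sub_zero, Nat.choose_eq_zero_of_lt (by omega : n - 1 < n)]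
    rw [← Finset.Ico_add_one_right_eq_Icc]
    norm_num
  rw [hext]
  -- sum = coeff of product with (1+X)^(n-1)
  have hcast : ((n-1 : ℕ) : ℚ) = (n:ℚ) - 1 := by
    rw [Nat.cast_sub (by omega : 1 ≤ n)]; norm_num
  have hprod : ∑ m ∈ Finset.range (n+1), ((n-1).choose (n-m) : ℚ) * c m
      = PowerSeries.coeff n (onePlusXPow ((n:ℚ)-1)
          * (PowerSeries.rescale (1/2) (onePlusXPow (-(k:ℚ))) * onePlusXPow (-x))) := by
    rw [PowerSeries.coeff_mul, Finset.Nat.sum_antidiagonal_eq_sum_range_succ_mk]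
    rw [← Finset.sum_range_reflect
      (fun i => PowerSeries.coeff i (onePlusXPow ((n:ℚ)-1)) * c (n - i)) (n+1)]
    refine Finset.sum_congr rfl fun m hm => ?_
    have hm' : m ≤ n := Nat.lt_succ_iff.1 (Finset.mem_range.1 hm)
    have e1 : n + 1 - 1 - m = n - m := by omega
    have e2 : n - (n - m) = m := by omega
    rw [e1, e2, coeff_onePlusXPow, ← hcast, gbinom_natCast]
  rw [hprod]
  have hassoc : onePlusXPow ((n:ℚ)-1)
        * (PowerSeries.rescale (1/2) (onePlusXPow (-(k:ℚ))) * onePlusXPow (-x))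
      = PowerSeries.rescale (1/2) (onePlusXPow (-(k:ℚ))) * onePlusXPow ((n:ℚ)-1-x) := by
    rw [show onePlusXPow ((n:ℚ)-1) * (PowerSeries.rescale (1/2) (onePlusXPow (-(k:ℚ))) * onePlusXPow (-x))
        = PowerSeries.rescale (1/2) (onePlusXPow (-(k:ℚ))) * (onePlusXPow ((n:ℚ)-1) * onePlusXPow (-x))
      from by ring, onePlusXPow_mul]
    congr 1
    ring
  rw [hassoc, main_identity n k x]
end
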